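/- Let A be a commutative ring with Krull dimension. Then A decomposes as a finite direct product A ≅ A₁ × ... × Aₙ where each Aᵢ has Krull dimension and has no idempotent proper nonzero ideal. -/

import Mathlib

open MulOpposite

/-- Deviation (Gabriel–Rentschler Krull dimension) of a preorder is `≤ α`:
in every strictly descending chain, all but finitely many of the
intervals (corresponding to successive factor modules) have deviation `< α`. -/
def DevLE (α : Ordinal.{0}) (P : Type) (inst : Preorder P) : Prop :=
  ∀ f : ℕ → P, (∀ n : ℕ, inst.lt (f (n + 1)) (f n)) →
    ∃ N : ℕ, ∀ n : ℕ, N ≤ n → ∃ β : Ordinal.{0}, ∃ _ : β < α,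
      DevLE β {x : P // inst.le (f (n + 1)) x ∧ inst.le x (f n)}
        (@Subtype.preorder P inst fun x => inst.le (f (n + 1)) x ∧ inst.le x (f n))
termination_by α

/-- A preorder has Krull dimension (deviation) if its deviation exists as an ordinal. -/
def HasKdimO (P : Type) [inst : Preorder P] : Prop := ∃ α : Ordinal.{0}, DevLE α P inst

/-- A module has Gabriel–Rentschler Krull dimension: the deviation of its submodule
lattice exists (intervals of this lattice are the submodule lattices of the
subquotients, so this agrees with the transfinite definition via factor modules). -/
def ModHasKdim (R M : Type) [Ring R] [AddCommGroup M] [Module R M] : Prop :=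
  HasKdimO (Submodule R M)

/-- A complete lattice (of submodules/ideals) is finite-dimensional: it contains no
infinite independent family (direct sum) of nonzero elements. -/
def FinDimL (L : Type) [CompleteLattice L] : Prop :=
  ¬ ∃ f : ℕ → L, (∀ n, f n ≠ ⊥) ∧ ∀ n, f n ⊓ (⨆ m, ⨆ _ : m ≠ n, f m) = ⊥

namespace SK15

theorem DevLE_iff (α : Ordinal.{0}) (P : Type) (inst : Preorder P) :
    DevLE α P inst ↔ ∀ f : ℕ → P, (∀ n : ℕ, inst.lt (f (n + 1)) (f n)) →
    ∃ N : ℕ, ∀ n : ℕ, N ≤ n → ∃ β : Ordinal.{0}, ∃ _ : β < α,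
      DevLE β {x : P // inst.le (f (n + 1)) x ∧ inst.le x (f n)}
        (@Subtype.preorder P inst fun x => inst.le (f (n + 1)) x ∧ inst.le x (f n)) := by
  rw [DevLE]

/-- Lemma A: transfer deviation along le/lt preserving maps. -/
theorem devle_mono {α : Ordinal.{0}} :
    ∀ {P Q : Type} (iP : Preorder P) (iQ : Preorder Q) (φ : Q → P),
      (∀ x y, iQ.le x y → iP.le (φ x) (φ y)) →
      (∀ x y, iQ.lt x y → iP.lt (φ x) (φ y)) →
      DevLE α P iP → DevLE α Q iQ := by
  induction α using Ordinal.induction with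
  | h α IH =>
    intro P Q iP iQ φ hle hlt hP
    rw [DevLE_iff] at hP ⊢
    intro f hf
    obtain ⟨N, hN⟩ := hP (fun n => φ (f n)) (fun n => hlt _ _ (hf n))
    refine ⟨N, fun n hn => ?_⟩
    obtain ⟨β, hβ, hdev⟩ := hN n hn
    refine ⟨β, hβ, ?_⟩
    exact IH β hβ _ _
      (fun x => (⟨φ x.1, hle _ _ x.2.1, hle _ _ x.2.2⟩ :
        {y : P // iP.le (φ (f (n+1))) y ∧ iP.le y (φ (f n))}))
      (fun x y h => hle _ _ h) (fun x y h => hlt _ _ h) hdev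

def DenseSet {P : Type} (inst : Preorder P) : Prop :=
  ∃ S : Set P, (∃ a ∈ S, ∃ b ∈ S, inst.lt a b) ∧
    ∀ a ∈ S, ∀ b ∈ S, inst.lt a b → ∃ c ∈ S, inst.lt a c ∧ inst.lt c b

theorem chain_of_step {T : Sort*} (R : T → T → Prop) (h : ∀ t, ∃ t', R t t') (t0 : T) :
    ∃ f : ℕ → T, f 0 = t0 ∧ ∀ n, R (f n) (f (n + 1)) := by
  choose g hg using h
  refine ⟨fun n => Nat.rec t0 (fun _ prev => g prev) n, rfl, fun n => hg _⟩

/-- Lemma C: deviation implies no dense subset. -/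
theorem devle_not_dense {α : Ordinal.{0}} :
    ∀ {P : Type} (inst : Preorder P), DevLE α P inst → ¬ DenseSet inst := by
  induction α using Ordinal.induction with
  | h α IH =>
    intro P inst hdev ⟨S, ⟨a, ha, b, hb, hab⟩, hdense⟩
    obtain ⟨g, hg0, hgstep⟩ := chain_of_step
      (T := {x : P // x ∈ S ∧ inst.lt a x})
      (fun t t' => inst.lt t'.1 t.1)
      (fun t => by
        obtain ⟨c, hc, hac, hct⟩ := hdense a ha t.1 t.2.1 t.2.2
        exact ⟨⟨c, hc, hac⟩, hct⟩)
      ⟨b, hb, hab⟩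
    set f : ℕ → P := fun n => (g n).1 with hf
    rw [DevLE_iff] at hdev
    obtain ⟨N, hN⟩ := hdev f (fun n => hgstep n)
    obtain ⟨β, hβ, hdevI⟩ := hN N le_rfl
    refine IH β hβ _ hdevI ?_
    refine ⟨{y | y.1 ∈ S}, ⟨⟨f (N+1), inst.le_refl _, le_of_lt (hgstep N)⟩, (g (N+1)).2.1,
      ⟨f N, le_of_lt (hgstep N), inst.le_refl _⟩, (g N).2.1, ?_⟩, ?_⟩
    · exact hgstep N
    · rintro x hx y hy hxy
      obtain ⟨c, hc, h1, h2⟩ := hdense x.1 hx y.1 hy hxy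
      refine ⟨⟨c, inst.le_trans _ _ _ x.2.1 (le_of_lt h1), inst.le_trans _ _ _ (le_of_lt h2) y.2.2⟩,
        hc, h1, h2⟩

theorem haskdim_transfer {P Q : Type} [iP : Preorder P] [iQ : Preorder Q] (φ : Q → P)
    (hle : ∀ x y : Q, x ≤ y → φ x ≤ φ y) (hlt : ∀ x y : Q, x < y → φ x < φ y) :
    HasKdimO P → HasKdimO Q := by
  rintro ⟨α, hα⟩
  exact ⟨α, devle_mono iP iQ φ hle hlt hα⟩

theorem haskdim_not_dense {P : Type} [inst : Preorder P] (h : HasKdimO P) : ¬ DenseSet inst := by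
  obtain ⟨α, hα⟩ := h
  exact devle_not_dense inst hα

end SK15

namespace SK15
section RingPart
variable {A : Type} [CommRing A]

def annIdeal (c : A) : Ideal A where
  carrier := {x | x * c = 0}
  add_mem' := by
    intro a b ha hb
    simp only [Set.mem_setOf_eq] at *
    rw [add_mul, ha, hb, add_zero]
  zero_mem' := by simp
  smul_mem' := by
    intro r x hx
    simp only [smul_eq_mul, Set.mem_setOf_eq] at *
    rw [mul_assoc, hx, mul_zero]

theorem mem_annIdeal_iff {c x : A} : x ∈ annIdeal c ↔ x * c = 0 := Iff.rfl

/-- From an infinite family of pairwise-orthogonal elements with nonzero squares,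
build a dense set of ideals. -/
theorem dense_of_family (δ : ℕ → A)
    (hsq : ∀ n, δ n * δ n ≠ 0) (horth : ∀ m n : ℕ, m ≠ n → δ m * δ n = 0) :
    DenseSet (inferInstance : Preorder (Ideal A)) := by
  classical
  set F : ℚ → Ideal A := fun r => Ideal.span {y | ∃ s : ℚ, s < r ∧ y = δ (Encodable.encode s)}
    with hF
  have hmono : ∀ p q : ℚ, p ≤ q → F p ≤ F q := by
    intro p q hpq
    apply Ideal.span_mono
    rintro y ⟨s, hs, rfl⟩
    exact ⟨s, lt_of_lt_of_le hs hpq, rfl⟩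
  have hmem : ∀ p q : ℚ, p < q → δ (Encodable.encode p) ∈ F q := by
    intro p q h
    exact Ideal.subset_span ⟨p, h, rfl⟩
  have hnotmem : ∀ p : ℚ, δ (Encodable.encode p) ∉ F p := by
    intro p hp
    have hle : F p ≤ annIdeal (δ (Encodable.encode p)) := by
      rw [hF, Ideal.span_le]
      rintro y ⟨s, hs, rfl⟩
      have : Encodable.encode s ≠ Encodable.encode p := by
        intro hcontra
        exact absurd (Encodable.encode_injective hcontra) (ne_of_lt hs)
      exact horth _ _ this
    exact hsq _ (hle hp)
  have hstrict : ∀ p q : ℚ, p < q → F p < F q := by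
    intro p q h
    refine lt_of_le_of_ne (hmono p q (le_of_lt h)) (fun he => ?_)
    exact hnotmem p (by rw [he]; exact hmem p q h)
  refine ⟨Set.range F, ⟨F 0, ⟨0, rfl⟩, F 1, ⟨1, rfl⟩, hstrict 0 1 (by norm_num)⟩, ?_⟩
  rintro a ⟨p, rfl⟩ b ⟨q, rfl⟩ hab
  have hpq : p < q := by
    by_contra hc
    push_neg at hc
    exact absurd (hmono q p hc) (not_le_of_gt hab)
  refine ⟨F ((p + q) / 2), ⟨_, rfl⟩, hstrict _ _ (by linarith), hstrict _ _ (by linarith)⟩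

theorem haskdim_quot (hk : HasKdimO (Ideal A)) (J : Ideal A) : HasKdimO (Ideal (A ⧸ J)) :=
  haskdim_transfer (Ideal.comap (Ideal.Quotient.mk J))
    (fun _ _ h => Ideal.comap_mono h)
    (fun _ _ h => lt_of_le_of_ne (Ideal.comap_mono h.le)
      (fun he => h.ne (Ideal.comap_injective_of_surjective _ Ideal.Quotient.mk_surjective he)))
    hk

/-- The "Jacobson-type" lemma: an idempotent ideal all of whose elements `l` have `1 - l`
invertible must be zero (given Krull dimension). -/
theorem idem_bot (hk : HasKdimO (Ideal A)) (I : Ideal A)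
    (hII : I * I = I) (hu : ∀ l ∈ I, IsUnit (1 - l)) : I = ⊥ := by
  by_contra hne
  apply haskdim_not_dense hk
  refine ⟨{J : Ideal A | J ≤ I ∧ I * J = J}, ⟨⊥, ⟨bot_le, Ideal.mul_bot I⟩, I, ⟨le_rfl, hII⟩,
    Ne.bot_lt hne⟩, ?_⟩
  rintro J₁ ⟨hJ₁I, hJ₁⟩ J₂ ⟨hJ₂I, hJ₂⟩ hlt
  -- find x ∈ J₂ with span{x} * I ⊄ J₁
  have hex : ∃ x ∈ J₂, ¬ (Ideal.span {x} * I ≤ J₁) := by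
    by_contra hc
    push_neg at hc
    have : J₂ ≤ J₁ := by
      conv_lhs => rw [← hJ₂]
      rw [Ideal.mul_le]
      intro r hr s hs
      have h2 : r * s ∈ Ideal.span {s} * I := by
        rw [mul_comm r s]
        exact Ideal.mul_mem_mul (Ideal.mem_span_singleton_self s) hr
      exact hc s hs h2
    exact absurd this (not_le_of_gt hlt)
  obtain ⟨x, hxJ₂, hxne⟩ := hex
  set K : Ideal A := J₁ ⊔ Ideal.span {x} * I with hK
  have hKS : K ≤ I ∧ I * K = K := by
    constructor
    · exact sup_le hJ₁I Ideal.mul_le_right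
    · rw [hK, Ideal.mul_sup, hJ₁]
      congr 1
      rw [show Ideal.span {x} * I = I * Ideal.span {x} from mul_comm _ _, ← mul_assoc, hII]
  have hKJ₂ : K ≤ J₂ := sup_le (le_of_lt hlt)
    (le_trans Ideal.mul_le_left (Ideal.span_le.mpr (Set.singleton_subset_iff.mpr hxJ₂)))
  refine ⟨K, hKS, lt_of_le_of_ne le_sup_left (fun he => hxne (by rw [he]; exact le_sup_right)),
    lt_of_le_of_ne hKJ₂ (fun he => ?_)⟩
  have hxK : x ∈ K := by rw [he]; exact hxJ₂
  rw [hK] at hxK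
  obtain ⟨j, hj, y, hy, hxy⟩ := Submodule.mem_sup.mp hxK
  obtain ⟨z, hz, hzy⟩ := Ideal.mem_span_singleton_mul.mp hy
  have hx1 : x * (1 - z) = j := by
    rw [mul_one_sub, hzy, ← hxy]
    ring
  have hunit := hu z hz
  have hxJ1 : x ∈ J₁ := by
    have hmem : (↑hunit.unit⁻¹ : A) * (x * (1 - z)) ∈ J₁ :=
      J₁.mul_mem_left _ (by rw [hx1]; exact hj)
    have hxx : (↑hunit.unit⁻¹ : A) * (x * (1 - z)) = x := by
      have h1 : (↑hunit.unit⁻¹ : A) * (x * (1 - z)) = ((↑hunit.unit⁻¹ : A) * (1 - z)) * x := by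
        ring
      rw [h1, hunit.val_inv_mul, one_mul]
    rwa [hxx] at hmem
  exact hxne (le_trans Ideal.mul_le_left
    (Ideal.span_le.mpr (Set.singleton_subset_iff.mpr hxJ1)))

/-- Idempotent ideals are "pure": every element has a local unit from the ideal. -/
theorem pure_of_idem (hk : HasKdimO (Ideal A)) (I : Ideal A) (hII : I * I = I) :
    ∀ x ∈ I, ∃ b ∈ I, x = b * x := by
  intro x hx
  have htop : annIdeal x ⊔ I = ⊤ := by
    by_contra hne
    obtain ⟨m, hm, hlem⟩ := Ideal.exists_le_maximal _ hne
    haveI : m.IsPrime := hm.isPrime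
    set L := Localization.AtPrime m with hL
    have hkL : HasKdimO (Ideal L) := haskdim_transfer
      (fun J => (IsLocalization.orderEmbedding m.primeCompl L) J)
      (fun a b h => (IsLocalization.orderEmbedding m.primeCompl L).monotone h)
      (fun a b h => (IsLocalization.orderEmbedding m.primeCompl L).strictMono h)
      hk
    set IL := Ideal.map (algebraMap A L) I with hIL
    have hILidem : IL * IL = IL := by rw [hIL, ← Ideal.map_mul, hII]
    have hILle : IL ≤ IsLocalRing.maximalIdeal L := by
      rw [hIL, Ideal.map_le_iff_le_comap]
      exact le_trans (le_trans le_sup_right hlem) (Localization.AtPrime.under_maximalIdeal (I := m)).ge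
    have hu : ∀ l ∈ IL, IsUnit (1 - l) := by
      intro l hl
      by_contra hnu
      have h1 : (1 : L) - l ∈ IsLocalRing.maximalIdeal L :=
        (IsLocalRing.mem_maximalIdeal _).mpr (mem_nonunits_iff.mpr hnu)
      have h2 : (1 : L) ∈ IsLocalRing.maximalIdeal L := by
        have h3 := (IsLocalRing.maximalIdeal L).add_mem h1 (hILle hl)
        simpa using h3
      exact (IsLocalRing.maximalIdeal.isMaximal L).ne_top ((Ideal.eq_top_iff_one _).mpr h2)
    have hILbot : IL = ⊥ := idem_bot hkL IL hILidem hu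
    have hximg : algebraMap A L x = 0 := by
      have h4 : algebraMap A L x ∈ IL := Ideal.mem_map_of_mem _ hx
      rw [hILbot] at h4
      simpa using h4
    obtain ⟨c, hc⟩ := (IsLocalization.map_eq_zero_iff m.primeCompl L x).mp hximg
    exact c.2 (hlem (Submodule.mem_sup_left (mem_annIdeal_iff.mpr hc)))
  have h1 : (1 : A) ∈ annIdeal x ⊔ I := by rw [htop]; exact Submodule.mem_top
  obtain ⟨t, ht, b, hb, htb⟩ := Submodule.mem_sup.mp h1
  refine ⟨b, hb, ?_⟩
  have h5 : x * (t + b) = x * 1 := by rw [htb]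
  have h6 : x * t = 0 := by
    have := mem_annIdeal_iff.mp ht
    rwa [mul_comm]
  calc x = x * 1 := by ring
    _ = x * t + x * b := by rw [← h5]; ring
    _ = b * x := by rw [h6]; ring

/-- Lifting idempotents along nilpotents. -/
theorem lift_idem : ∀ (k : ℕ) (e : A), (e * e - e) ^ k = 0 →
    ∃ f : A, f * f = f ∧ f - e ∈ Ideal.span {e * e - e} := by
  intro k
  induction k using Nat.strong_induction_on with
  | _ k IH =>
    intro e he
    match k, he with
    | 0, he =>
      have h01 : (1 : A) = 0 := by simpa using he
      have hall : ∀ y : A, y = 0 := fun y => by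
        calc y = y * 1 := by ring
          _ = 0 := by rw [h01, mul_zero]
      refine ⟨0, by rw [mul_zero], ?_⟩
      rw [hall (0 - e)]
      exact Ideal.zero_mem _
    | 1, he =>
      rw [pow_one] at he
      refine ⟨e, sub_eq_zero.mp he, ?_⟩
      rw [sub_self]
      exact Ideal.zero_mem _
    | (k + 2), he =>
      set e' := 3 * e ^ 2 - 2 * e ^ 3 with he'
      have hkey : e' * e' - e' = (e * e - e) ^ 2 * (4 * (e * e) - 4 * e - 3) := by
        rw [he']; ring
      have hpow : (e' * e' - e') ^ (k + 1) = 0 := by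
        rw [hkey, mul_pow, ← pow_mul]
        have h2 : (e * e - e) ^ (2 * (k + 1)) = 0 := by
          have : 2 * (k + 1) = (k + 2) + k := by ring
          rw [this, pow_add, he, zero_mul]
        rw [h2, zero_mul]
      obtain ⟨f, hf, hfe⟩ := IH (k + 1) (by omega) e' hpow
      refine ⟨f, hf, ?_⟩
      have hle : Ideal.span {e' * e' - e'} ≤ Ideal.span {e * e - e} := by
        rw [Ideal.span_singleton_le_span_singleton, hkey]
        exact Dvd.dvd.mul_right (dvd_pow_self _ two_ne_zero) _
      have h1 : f - e' ∈ Ideal.span {e * e - e} := hle hfe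
      have h2 : e' - e ∈ Ideal.span {e * e - e} := by
        rw [Ideal.mem_span_singleton]
        exact ⟨1 - 2 * e, by rw [he']; ring⟩
      have := Ideal.add_mem _ h1 h2
      simpa using this

/-- The core lemma: a nonzero idempotent ideal contains a nonzero idempotent element. -/
theorem core_idem (hk : HasKdimO (Ideal A)) (I : Ideal A) (hII : I * I = I) (hne : I ≠ ⊥) :
    ∃ e ∈ I, e * e = e ∧ e ≠ 0 := by
  by_contra hno
  push_neg at hno
  have hpure := pure_of_idem hk I hII
  set N := nilradical A with hN
  set Q := A ⧸ N with hQ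
  set π := Ideal.Quotient.mk N with hπ
  have hkQ : HasKdimO (Ideal Q) := haskdim_quot hk N
  set P := Ideal.map π I with hP
  have hPidem : P * P = P := by rw [hP, ← Ideal.map_mul, hII]
  have hred : ∀ ξ : Q, ξ * ξ = 0 → ξ = 0 := by
    intro ξ hξ
    obtain ⟨x, rfl⟩ := Ideal.Quotient.mk_surjective (I := N) ξ
    have hxx : x * x ∈ N := by
      rw [← Ideal.Quotient.eq_zero_iff_mem (I := N), map_mul]
      exact hξ
    have hnil : IsNilpotent x := by
      obtain ⟨n, hn⟩ := mem_nilradical.mp hxx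
      refine ⟨2 * n, ?_⟩
      rw [pow_mul, pow_two, hn]
    rw [Ideal.Quotient.eq_zero_iff_mem]
    exact mem_nilradical.mpr hnil
  have hPne : P ≠ ⊥ := by
    intro hbot
    apply hne
    apply idem_bot hk I hII
    intro l hl
    have hl0 : π l = 0 := by
      have : π l ∈ P := Ideal.mem_map_of_mem π hl
      rw [hbot] at this
      simpa using this
    have hnil : IsNilpotent l := mem_nilradical.mp (Ideal.Quotient.eq_zero_iff_mem.mp hl0)
    exact hnil.isUnit_one_sub
  have hPpure : ∀ ξ ∈ P, ∃ β ∈ P, ξ = β * ξ := by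
    intro ξ hξ
    obtain ⟨x, hxI, rfl⟩ :=
      (Ideal.mem_map_iff_of_surjective π Ideal.Quotient.mk_surjective).mp hξ
    obtain ⟨b, hbI, hbx⟩ := hpure x hxI
    exact ⟨π b, Ideal.mem_map_of_mem π hbI, by rw [← map_mul, ← hbx]⟩
  have hPno : ∀ ξ ∈ P, ξ * ξ = ξ → ξ = 0 := by
    intro ξ hξ hidem
    by_contra hξne
    obtain ⟨x, hxI, rfl⟩ :=
      (Ideal.mem_map_iff_of_surjective π Ideal.Quotient.mk_surjective).mp hξ
    have hη : IsNilpotent (x * x - x) := by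
      apply mem_nilradical.mp
      rw [← Ideal.Quotient.eq_zero_iff_mem (I := N), map_sub, map_mul]
      rw [hidem, sub_self]
    obtain ⟨kk, hkk⟩ := hη
    obtain ⟨f, hf, hfe⟩ := lift_idem kk x hkk
    have hηI : x * x - x ∈ I := I.sub_mem (I.mul_mem_left x hxI) hxI
    have hfI : f ∈ I := by
      have h1 : f - x ∈ I := Ideal.span_le.mpr (Set.singleton_subset_iff.mpr hηI) hfe
      have h2 := I.add_mem h1 hxI
      simpa using h2
    have hf0 : f = 0 := hno f hfI hf
    apply hξne
    have hηN : x * x - x ∈ N := mem_nilradical.mpr ⟨kk, hkk⟩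
    have hfx : f - x ∈ N := Ideal.span_le.mpr (Set.singleton_subset_iff.mpr hηN) hfe
    have heq : π f = π x := Ideal.Quotient.mk_eq_mk_iff_sub_mem f x |>.mpr hfx
    rw [← heq, hf0, map_zero]
  -- Tower construction in Q
  have hstep : ∀ t : {c : Q // c ∈ P}, ∃ t' : {c : Q // c ∈ P},
      (t.1 = t'.1 * t.1) ∧ ∃ x : Q, x * (1 - t.1) ≠ 0 ∧ x * (1 - t'.1) = 0 := by
    rintro ⟨c, hc⟩
    have hxex : ∃ x ∈ P, x * (1 - c) ≠ 0 := by
      by_contra hcon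
      push_neg at hcon
      have hcc : c * c = c := by
        have := hcon c hc
        have h2 : c * (1 - c) = 0 := this
        calc c * c = c - c * (1 - c) := by ring
          _ = c := by rw [h2]; ring
      have hc0 : c = 0 := hPno c hc hcc
      apply hPne
      rw [eq_bot_iff]
      intro y hy
      have := hcon y hy
      rw [hc0] at this
      simpa using this
    obtain ⟨x, hxP, hxne⟩ := hxex
    obtain ⟨u, huP, hu⟩ := hPpure c hc
    obtain ⟨v, hvP, hv⟩ := hPpure x hxP
    set c' := u + v - u * v with hc'
    have hc'P : c' ∈ P := Submodule.sub_mem _ (Submodule.add_mem _ huP hvP) (Ideal.mul_mem_right v _ huP)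
    refine ⟨⟨c', hc'P⟩, ?_, x, hxne, ?_⟩
    · have h1 : c * (1 - u) = 0 := by
        calc c * (1 - u) = c - u * c := by ring
          _ = 0 := by rw [← hu]; ring
      calc c = c - (c * (1 - u)) * (1 - v) := by rw [h1]; ring
        _ = c' * c := by rw [hc']; ring
    · have h2 : x * (1 - v) = 0 := by
        calc x * (1 - v) = x - v * x := by ring
          _ = 0 := by rw [← hv]; ring
      calc x * (1 - c') = (x * (1 - v)) * (1 - u) := by rw [hc']; ring
        _ = 0 := by rw [h2]; ring
  obtain ⟨g, hg0, hgstep⟩ := chain_of_step _ hstep ⟨0, P.zero_mem⟩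
  set c : ℕ → Q := fun n => (g n).1 with hc
  have hstep1 : ∀ n, c n = c (n + 1) * c n := fun n => (hgstep n).1
  have hstep2 : ∀ n, ∃ x : Q, x * (1 - c n) ≠ 0 ∧ x * (1 - c (n + 1)) = 0 :=
    fun n => (hgstep n).2
  have hchain : ∀ i j, i < j → c i * (1 - c j) = 0 := by
    intro i j hij
    induction j with
    | zero => omega
    | succ j IHj =>
      rcases Nat.lt_succ_iff_lt_or_eq.mp hij with h | h
      · have h1 := IHj h
        have h2 := hstep1 j
        linear_combination (1 - c (j + 1)) * h1 + c i * h2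
      · subst h
        have h2 := hstep1 i
        linear_combination h2
  set δ : ℕ → Q := fun n => c (n + 1) * (1 - c n) with hδ
  have hδne : ∀ n, δ n ≠ 0 := by
    intro n h0
    obtain ⟨x, hx1, hx2⟩ := hstep2 n
    apply hx1
    have h2 := hstep1 n
    linear_combination hx2 + x * h0 - x * h2
  have hδorth : ∀ i j, i + 2 ≤ j → δ i * δ j = 0 := by
    intro i j hij
    have h1 : c (i + 1) * (1 - c j) = 0 := hchain (i + 1) j (by omega)
    rw [hδ]
    linear_combination (c (j + 1) * (1 - c i)) * h1
  have hdense : DenseSet (inferInstance : Preorder (Ideal Q)) := by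
    apply dense_of_family (fun k => δ (2 * k))
    · intro n h0
      exact hδne (2 * n) (hred _ h0)
    · intro m n hmn
      rcases lt_or_gt_of_ne hmn with h | h
      · exact hδorth (2 * m) (2 * n) (by omega)
      · rw [mul_comm]
        exact hδorth (2 * n) (2 * m) (by omega)
  exact haskdim_not_dense hkQ hdense

/-- Big lemma: every idempotent ideal is generated by an idempotent element. -/
theorem idem_span (hk : HasKdimO (Ideal A)) (J : Ideal A) (hJJ : J * J = J) :
    ∃ e : A, e * e = e ∧ e ∈ J ∧ J = Ideal.span {e} := by
  classical
  set PP : Set (Ideal A) := {K | ∃ e : A, e * e = e ∧ e ∈ J ∧ K = Ideal.span {e}} with hPP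
  have hmax : ∃ e : A, e * e = e ∧ e ∈ J ∧
      ∀ K' ∈ PP, Ideal.span {e} ≤ K' → Ideal.span {e} = K' := by
    by_contra hcon
    push_neg at hcon
    have hstep : ∀ t : {e : A // e * e = e ∧ e ∈ J},
        ∃ t' : {e : A // e * e = e ∧ e ∈ J},
          t.1 = t.1 * t'.1 ∧ Ideal.span {t.1} ≤ Ideal.span {t'.1} ∧
            Ideal.span {t.1} ≠ Ideal.span {t'.1} := by
      rintro ⟨e, he, heJ⟩
      obtain ⟨K', hK', hle, hne⟩ := hcon e he heJ
      obtain ⟨e', he', he'J, rfl⟩ := hK'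
      refine ⟨⟨e', he', he'J⟩, ?_, hle, hne⟩
      have hmem : e ∈ Ideal.span {e'} := hle (Ideal.mem_span_singleton_self e)
      obtain ⟨s, hs⟩ := Ideal.mem_span_singleton'.mp hmem
      calc e = s * e' := hs.symm
        _ = s * e' * e' := by rw [mul_assoc, he']
        _ = e * e' := by rw [hs]
    obtain ⟨g, hg0, hgstep⟩ := chain_of_step _ hstep ⟨0, by ring, J.zero_mem⟩
    set e : ℕ → A := fun n => (g n).1 with he
    have hidem : ∀ n, e n * e n = e n := fun n => (g n).2.1
    have hstep1 : ∀ n, e n = e n * e (n + 1) := fun n => (hgstep n).1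
    have hstrict : ∀ n, Ideal.span {e n} ≤ Ideal.span {e (n + 1)} ∧
        Ideal.span {e n} ≠ Ideal.span {e (n + 1)} := fun n => (hgstep n).2
    have hchain : ∀ i j, i < j → e i * (1 - e j) = 0 := by
      intro i j hij
      induction j with
      | zero => omega
      | succ j IHj =>
        rcases Nat.lt_succ_iff_lt_or_eq.mp hij with h | h
        · have h1 := IHj h
          have h2 := hstep1 j
          linear_combination (1 - e (j + 1)) * h1 + e i * h2
        · subst h
          linear_combination hstep1 i
    set δ : ℕ → A := fun n => e (n + 1) * (1 - e n) with hδ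
    have hδidem : ∀ n, δ n * δ n = δ n := by
      intro n
      have h1 := hidem (n + 1)
      have h2 := hidem n
      rw [hδ]
      linear_combination (1 - e n) ^ 2 * h1 + e (n + 1) * h2
    have hδne : ∀ n, δ n ≠ 0 := by
      intro n h0
      rw [hδ] at h0
      apply (hstrict n).2
      refine le_antisymm (hstrict n).1 ?_
      rw [Ideal.span_singleton_le_span_singleton]
      refine ⟨e (n + 1), ?_⟩
      linear_combination h0
    have hδorth : ∀ m n : ℕ, m ≠ n → δ m * δ n = 0 := by
      have key : ∀ i j, i < j → δ i * δ j = 0 := by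
        intro i j hij
        have h1 : e (i + 1) * (1 - e j) = 0 := by
          rcases Nat.lt_or_ge (i + 1) j with h | h
          · exact hchain (i + 1) j h
          · have : i + 1 = j := by omega
            subst this
            linear_combination -hidem (i + 1)
        rw [hδ]
        linear_combination (e (j + 1) * (1 - e i)) * h1
      intro m n hmn
      rcases lt_or_gt_of_ne hmn with h | h
      · exact key m n h
      · rw [mul_comm]; exact key n m h
    apply haskdim_not_dense hk
    apply dense_of_family δ
    · intro n h0
      exact hδne n (by rw [← hδidem n]; exact h0)
    · exact hδorth
  obtain ⟨es, hes, hesJ, hesmax⟩ := hmax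
  have hsub : ∀ g : A, g * g = g → g ∈ J → g = g * es := by
    intro g hg hgJ
    set m := es + g - es * g with hm
    have hmidem : m * m = m := by
      rw [hm]
      linear_combination (1 - g) ^ 2 * hes + (1 - es) * hg
    have hmJ : m ∈ J := J.sub_mem (J.add_mem hesJ hgJ) (J.mul_mem_left es hgJ)
    have hle : Ideal.span {es} ≤ Ideal.span {m} := by
      rw [Ideal.span_singleton_le_span_singleton]
      refine ⟨es, ?_⟩
      rw [hm]
      linear_combination (g - 1) * hes
    have heq := hesmax (Ideal.span {m}) ⟨m, hmidem, hmJ, rfl⟩ hle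
    have hmmem : m ∈ Ideal.span {es} := by
      rw [heq]
      exact Ideal.mem_span_singleton_self m
    obtain ⟨t, ht⟩ := Ideal.mem_span_singleton'.mp hmmem
    -- m = t * es ⇒ m * (1 - es) = 0 ⇒ g * (1 - es) = 0
    have h1 : m * (1 - es) = 0 := by
      rw [← ht]
      linear_combination (-t) * hes
    have h2 : g * (1 - es) = 0 := by
      rw [hm] at h1
      linear_combination h1 + (1 - g) * hes
    linear_combination h2
  refine ⟨es, hes, hesJ, ?_⟩
  set J' := J * Ideal.span {1 - es} with hJ'
  have hJ'idem : J' * J' = J' := by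
    rw [hJ']
    rw [show J * Ideal.span {1 - es} * (J * Ideal.span {1 - es})
        = (J * J) * (Ideal.span {1 - es} * Ideal.span {1 - es}) by ring]
    have h6 : (1 - es) * (1 - es) = 1 - es := by linear_combination hes
    rw [hJJ, Ideal.span_singleton_mul_span_singleton, h6]
  have hJ'bot : J' = ⊥ := by
    by_contra hJ'ne
    obtain ⟨gg, hggJ', hggidem, hggne⟩ := core_idem hk J' hJ'idem hJ'ne
    have hggJ : gg ∈ J := Ideal.mul_le_left hggJ'
    have hggspan : gg ∈ Ideal.span {1 - es} := Ideal.mul_le_right hggJ'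
    obtain ⟨t, ht⟩ := Ideal.mem_span_singleton'.mp hggspan
    have h3 : gg * es = 0 := by
      rw [← ht]
      linear_combination (-t) * hes
    have h4 := hsub gg hggidem hggJ
    exact hggne (by rw [h4, h3])
  apply le_antisymm
  · intro x hx
    have hx' : x * (1 - es) ∈ J' := Ideal.mul_mem_mul hx (Ideal.mem_span_singleton_self _)
    rw [hJ'bot] at hx'
    have h5 : x * (1 - es) = 0 := by simpa using hx'
    rw [Ideal.mem_span_singleton']
    exact ⟨x, by linear_combination -h5⟩
  · rw [Ideal.span_le, Set.singleton_subset_iff]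
    exact hesJ

def IsAtomIdem (a : A) : Prop :=
  a * a = a ∧ a ≠ 0 ∧ ∀ f : A, f * f = f → f = f * a → f = 0 ∨ f = a

theorem atom_orth {a b : A} (ha : IsAtomIdem a) (hb : IsAtomIdem b) (hab : a ≠ b) :
    a * b = 0 := by
  obtain ⟨ha1, ha2, ha3⟩ := ha
  obtain ⟨hb1, hb2, hb3⟩ := hb
  have hc1 : (a * b) * (a * b) = a * b := by
    linear_combination b * b * ha1 + a * hb1
  have hc2 : a * b = (a * b) * b := by linear_combination (-a) * hb1
  have hc3 : a * b = (a * b) * a := by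
    linear_combination (-b) * ha1
  rcases hb3 (a * b) hc1 hc2 with h | h
  · exact h
  · rcases ha3 (a * b) hc1 hc3 with h' | h'
    · exact h'
    · exact absurd (h'.symm.trans h) hab

theorem atoms_finite (hk : HasKdimO (Ideal A)) : {a : A | IsAtomIdem a}.Finite := by
  by_contra hinf
  have g := Set.Infinite.natEmbedding _ (hinf : Set.Infinite _)
  apply haskdim_not_dense hk
  apply dense_of_family (fun n => (g n).1)
  · intro n h0
    obtain ⟨hidem, hne, -⟩ := (g n).2
    rw [hidem] at h0
    exact hne h0
  · intro m n hmn
    have hne' : (g m).1 ≠ (g n).1 := fun he => hmn (g.injective (Subtype.ext he))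
    exact atom_orth (g m).2 (g n).2 hne'

theorem atoms_sum (hk : HasKdimO (Ideal A)) :
    ∑ a ∈ (atoms_finite hk).toFinset, a = 1 := by
  classical
  set s := (atoms_finite hk).toFinset with hs
  have hmem : ∀ a, a ∈ s ↔ IsAtomIdem a := by
    intro a
    rw [hs, Set.Finite.mem_toFinset]
    rfl
  set t := ∑ a ∈ s, a with ht
  have hF1 : ∀ a ∈ s, a * t = a := by
    intro a ha
    rw [ht, Finset.mul_sum]
    rw [Finset.sum_eq_single a]
    · exact ((hmem a).mp ha).1
    · intro b hb hba
      exact atom_orth ((hmem a).mp ha) ((hmem b).mp hb) (Ne.symm hba)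
    · intro hna
      exact absurd ha hna
  have hF2 : t * t = t := by
    rw [ht, Finset.sum_mul]
    apply Finset.sum_congr rfl
    intro a ha
    exact hF1 a ha
  have hbb : (1 - t) * (1 - t) = 1 - t := by linear_combination hF2
  have hb0 : 1 - t = 0 := by
    by_contra hbne
    -- splitting chain below 1 - t
    have hstep : ∀ x : {x : A // x * x = x ∧ x ≠ 0 ∧ x * (1 - t) = x},
        ∃ x' : {x : A // x * x = x ∧ x ≠ 0 ∧ x * (1 - t) = x},
          x'.1 * x.1 = x'.1 ∧ x.1 - x'.1 ≠ 0 := by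
      rintro ⟨x, hx1, hx2, hx3⟩
      have hnotatom : ¬ IsAtomIdem x := by
        intro hat
        have hxs : x ∈ s := (hmem x).mpr hat
        have : x * (1 - t) = 0 := by linear_combination (-1) * hF1 x hxs
        exact hx2 (by rw [← hx3, this])
      rw [IsAtomIdem] at hnotatom
      push_neg at hnotatom
      obtain ⟨f, hf1, hf2, hf3, hf4⟩ := hnotatom hx1 hx2
      -- x' := x - f
      refine ⟨⟨x - f, ?_, ?_, ?_⟩, ?_, ?_⟩
      · linear_combination hx1 + hf1 + (-2) * (by linear_combination (-1) * hf2 : f * x = f)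
      · intro h0
        exact hf4 (by linear_combination (-1) * h0)
      · have hfx : f * (1 - t) = f := by
          calc f * (1 - t) = (f * x) * (1 - t) := by
                rw [show f * x = f by linear_combination (-1) * hf2]
            _ = f * (x * (1 - t)) := by ring
            _ = f := by rw [hx3]; linear_combination (-1) * hf2
        linear_combination hx3 - hfx
      · -- (x - f) * x = x - f
        linear_combination hx1 - (by linear_combination (-1) * hf2 : f * x = f)
      · -- x - (x - f) = f ≠ 0
        intro h0
        exact hf3 (by linear_combination h0)
    obtain ⟨g, hg0, hgstep⟩ := chain_of_step _ hstep ⟨1 - t, hbb, hbne, hbb⟩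
    set c : ℕ → A := fun n => (g n).1 with hc
    have hcidem : ∀ n, c n * c n = c n := fun n => (g n).2.1
    have hrel : ∀ n, c (n + 1) * c n = c (n + 1) := fun n => (hgstep n).1
    have hchain : ∀ i j, i < j → c j * c (i + 1) = c j := by
      intro i j hij
      induction j with
      | zero => omega
      | succ j IHj =>
        rcases Nat.lt_succ_iff_lt_or_eq.mp hij with h | h
        · have h1 := IHj h
          have h2 := hrel j
          linear_combination (-(c (i + 1))) * h2 + c (j + 1) * h1 + h2
        · subst h
          exact hcidem (i + 1)
    set d : ℕ → A := fun n => c n - c (n + 1) with hd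
    have hdne : ∀ n, d n ≠ 0 := fun n => (hgstep n).2
    have hdidem : ∀ n, d n * d n = d n := by
      intro n
      rw [hd]
      linear_combination hcidem n + hcidem (n + 1) + (-2) * hrel n
    have hdorthk : ∀ i j, i < j → d i * d j = 0 := by
      intro i j hij
      have h1 : d j * c (i + 1) = d j := by
        rw [hd]
        have h2 := hchain i j hij
        have h3 : c (j + 1) * c (i + 1) = c (j + 1) := hchain i (j + 1) (by omega)
        linear_combination h2 - h3
      have h4 : d i * c (i + 1) = 0 := by
        rw [hd]
        linear_combination hrel i - hcidem (i + 1)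
      calc d i * d j = (d i * c (i + 1)) * d j - d i * (d j * c (i + 1) - d j) := by ring
        _ = 0 := by rw [h4, h1]; ring
    apply haskdim_not_dense hk
    apply dense_of_family d
    · intro n h0
      exact hdne n (by rw [← hdidem n]; exact h0)
    · intro m n hmn
      rcases lt_or_gt_of_ne hmn with h | h
      · exact hdorthk m n h
      · rw [mul_comm]; exact hdorthk n m h
  linear_combination (-1) * hb0

end RingPart
end SK15

theorem stmt15 (A : Type) [CommRing A] (h : HasKdimO (Ideal A)) :
    ∃ (n : ℕ) (B : Fin n → Type) (hB : ∀ i, CommRing (B i)),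
      Nonempty (A ≃+* ((i : Fin n) → B i)) ∧
      ∀ i, letI := hB i
        HasKdimO (Ideal (B i)) ∧
          ∀ J : Ideal (B i), J ≠ ⊥ → J ≠ ⊤ → J * J ≠ J := by
  classical
  set s := (SK15.atoms_finite h).toFinset with hs
  have hmem : ∀ a, a ∈ s ↔ SK15.IsAtomIdem a := fun a => by
    rw [hs, Set.Finite.mem_toFinset]
    rfl
  have hsum : ∑ a ∈ s, a = 1 := SK15.atoms_sum h
  set n := s.card with hn
  set E : Fin n → A := fun i => ((s.equivFin.symm i : s) : A) with hE
  have hEatom : ∀ i, SK15.IsAtomIdem (E i) := fun i => (hmem _).mp (s.equivFin.symm i).2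
  have hEinj : Function.Injective E := by
    intro i j hij
    exact s.equivFin.symm.injective (Subtype.ext hij)
  have hco : CompleteOrthogonalIdempotents E := by
    refine ⟨⟨fun i => (hEatom i).1,
      fun i j hij => SK15.atom_orth (hEatom i) (hEatom j) (fun he => hij (hEinj he))⟩, ?_⟩
    rw [hE]
    calc ∑ i, ((s.equivFin.symm i : s) : A) = ∑ a : s, (a : A) :=
          Equiv.sum_comp s.equivFin.symm (fun a : s => (a : A))
      _ = ∑ a ∈ s, a := Finset.sum_coe_sort s (fun a => a)
      _ = 1 := hsum
  refine ⟨n, fun i => A ⧸ Ideal.span {1 - E i}, fun i => inferInstance,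
    ⟨RingEquiv.ofBijective _ hco.bijective_pi⟩, ?_⟩
  intro i
  refine ⟨SK15.haskdim_quot h _, ?_⟩
  intro J hJb hJt hJJ
  obtain ⟨ε, hεid, hεJ, hJspan⟩ := SK15.idem_span (SK15.haskdim_quot h _) J hJJ
  have htriv : ε = 0 ∨ ε = 1 := by
    obtain ⟨y, rfl⟩ := Ideal.Quotient.mk_surjective ε
    have hyy : y * y - y ∈ Ideal.span {1 - E i} := by
      rw [← Ideal.Quotient.eq_zero_iff_mem, map_sub, map_mul, hεid, sub_self]
    obtain ⟨u, hu⟩ := Ideal.mem_span_singleton'.mp hyy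
    set tt := y * E i with htt
    have hEi := (hEatom i).1
    have httid : tt * tt = tt := by
      rw [htt]
      linear_combination (y * y - u) * hEi - (E i) * hu
    have httEi : tt = tt * E i := by
      rw [htt]
      linear_combination (-y) * hEi
    have hq1 : Ideal.Quotient.mk (Ideal.span {1 - E i}) (E i) = 1 := by
      have h0 : Ideal.Quotient.mk (Ideal.span {1 - E i}) (1 - E i) = 0 :=
        Ideal.Quotient.eq_zero_iff_mem.mpr (Ideal.mem_span_singleton_self _)
      rw [map_sub, map_one, sub_eq_zero] at h0
      exact h0.symm
    have hqtt : Ideal.Quotient.mk (Ideal.span {1 - E i}) tt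
        = Ideal.Quotient.mk (Ideal.span {1 - E i}) y := by
      rw [htt, map_mul, hq1, mul_one]
    rcases (hEatom i).2.2 tt httid httEi with h0 | h0
    · left
      rw [← hqtt, h0, map_zero]
    · right
      rw [← hqtt, h0, hq1]
  rcases htriv with h0 | h0
  · apply hJb
    rw [hJspan, h0]
    exact Ideal.span_singleton_eq_bot.mpr rfl
  · apply hJt
    rw [hJspan, h0]
    exact Ideal.span_singleton_one
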